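/- Let n ≥ 2 and let I be a finite set of diagonals of the convex (n+3)-gon G_{n+3} such that the non-crossing graph G(I) has at least two connected components. Then there exists a vertex m ∈ {1,…,n+3} such that the number of diagonals in I having m as an endpoint is at most (n+1)/2, i.e., 2·c_I(m) ≤ n+1, where c_I(m) = #{d ∈ I : m is an endpoint of d}. -/

import Mathlib

/-- A diagonal of the convex `N`-gon with vertices labelled `1, …, N` in cyclic order:
a pair `(i, j)` with `1 ≤ i`, `i + 2 ≤ j ≤ N`, excluding the edge `(1, N)`. -/
def IsDiag (N : ℕ) (d : ℕ × ℕ) : Prop :=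
  1 ≤ d.1 ∧ d.1 + 2 ≤ d.2 ∧ d.2 ≤ N ∧ ¬(d.1 = 1 ∧ d.2 = N)

instance (N : ℕ) (d : ℕ × ℕ) : Decidable (IsDiag N d) := by
  unfold IsDiag; infer_instance

/-- Two diagonals of a convex polygon cross (intersect at an interior point). -/
def Crosses (d e : ℕ × ℕ) : Prop :=
  (d.1 < e.1 ∧ e.1 < d.2 ∧ d.2 < e.2) ∨ (e.1 < d.1 ∧ d.1 < e.2 ∧ e.2 < d.2)

instance (d e : ℕ × ℕ) : Decidable (Crosses d e) := by
  unfold Crosses; infer_instance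

/-- The finite set of all diagonals of the convex `N`-gon. -/
def Diags (N : ℕ) : Finset (ℕ × ℕ) :=
  (Finset.range (N + 1) ×ˢ Finset.range (N + 1)).filter (IsDiag N)
/-- The non-crossing graph `G(I)` on a finite set `I` of diagonals: two distinct
diagonals are adjacent iff they do not cross. Its connected components correspond to
the connected components of the union `P_I` of the facets of the associahedron `Asⁿ`
indexed by `I`. -/
def ncGraph (I : Finset (ℕ × ℕ)) : SimpleGraph {x // x ∈ I} where
  Adj d e := d ≠ e ∧ ¬ Crosses d.1 e.1
  symm := ⟨by
    rintro d e ⟨h1, h2⟩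
    exact ⟨h1.symm, fun h => h2 (Or.symm h)⟩⟩
  loopless := ⟨fun d h => h.1 rfl⟩

/-- `G(I)` has exactly two connected components, `I₁` and `I₂`: they partition `I`,
are nonempty, and two diagonals of `I` are joined by a path in the non-crossing graph
iff they lie in the same part. -/
def TwoComponents (I I₁ I₂ : Finset (ℕ × ℕ)) : Prop :=
  I₁ ∪ I₂ = I ∧ Disjoint I₁ I₂ ∧ I₁.Nonempty ∧ I₂.Nonempty ∧
    ∀ (d : ℕ × ℕ) (hd : d ∈ I) (e : ℕ × ℕ) (he : e ∈ I),
      (ncGraph I).Reachable ⟨d, hd⟩ ⟨e, he⟩ ↔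
        (d ∈ I₁ ∧ e ∈ I₁) ∨ (d ∈ I₂ ∧ e ∈ I₂)

lemma noncross_of_share {d e : ℕ × ℕ}
    (h : d.1 = e.1 ∨ d.1 = e.2 ∨ d.2 = e.1 ∨ d.2 = e.2) : ¬ Crosses d e := by
  unfold Crosses; omega

lemma reach_of_noncross (I : Finset (ℕ × ℕ)) {d e : ℕ × ℕ} (hd : d ∈ I) (he : e ∈ I)
    (h : ¬ Crosses d e) : (ncGraph I).Reachable ⟨d, hd⟩ ⟨e, he⟩ := by
  by_cases hde : (⟨d, hd⟩ : {x // x ∈ I}) = ⟨e, he⟩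
  · exact hde ▸ SimpleGraph.Reachable.refl _
  · exact (SimpleGraph.Adj.reachable (⟨hde, h⟩ : (ncGraph I).Adj ⟨d, hd⟩ ⟨e, he⟩))

lemma bridge (n : ℕ) (I : Finset (ℕ × ℕ)) (hdiag : ∀ d ∈ I, IsDiag (n + 3) d)
    (m m' : ℕ) (hm : 1 ≤ m) (hm2 : m ≤ n + 3) (hm' : 1 ≤ m') (hm'2 : m' ≤ n + 3)
    (hc : n + 2 ≤ 2 * (I.filter (fun d => d.1 = m ∨ d.2 = m)).card)
    (hc' : n + 2 ≤ 2 * (I.filter (fun d => d.1 = m' ∨ d.2 = m')).card) :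
    ∃ d ∈ I.filter (fun d => d.1 = m ∨ d.2 = m),
      ∃ e ∈ I.filter (fun d => d.1 = m' ∨ d.2 = m'), ¬ Crosses d e := by
  classical
  set Im := I.filter (fun d => d.1 = m ∨ d.2 = m) with hIm
  set Im' := I.filter (fun d => d.1 = m' ∨ d.2 = m') with hIm'
  have hImne : Im.Nonempty := Finset.card_pos.mp (by omega)
  have hIm'ne : Im'.Nonempty := Finset.card_pos.mp (by omega)
  by_cases hmm : m = m'
  · obtain ⟨d, hd⟩ := hImne
    refine ⟨d, hd, d, ?_, noncross_of_share (Or.inl rfl)⟩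
    rw [hIm'] ; rw [hIm] at hd
    simp only [Finset.mem_filter] at hd ⊢
    exact ⟨hd.1, by omega⟩
  · by_contra hall
    push_neg at hall
    have hall' : ∀ d ∈ Im, ∀ e ∈ Im', Crosses d e := by
      intro d hd e he
      by_contra hc
      exact hc (hall d hd e he)
    -- endpoints facts
    have hmemIm : ∀ d ∈ Im, d ∈ I ∧ (d.1 = m ∨ d.2 = m) := by
      intro d hd; rw [hIm] at hd; simpa using hd
    have hmemIm' : ∀ e ∈ Im', e ∈ I ∧ (e.1 = m' ∨ e.2 = m') := by
      intro e he; rw [hIm'] at he; simpa using he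
    set f : ℕ × ℕ → ℕ := fun d => if d.1 = m then d.2 else d.1 with hf
    set g : ℕ × ℕ → ℕ := fun d => if d.1 = m' then d.2 else d.1 with hg
    have hfspec : ∀ d ∈ Im, (d.1 = m ∧ d.2 = f d) ∨ (d.1 = f d ∧ d.2 = m) := by
      intro d hd
      obtain ⟨hdI, hdm⟩ := hmemIm d hd
      have := hdiag d hdI
      unfold IsDiag at this
      rcases hdm with h1 | h2
      · left; exact ⟨h1, by simp [hf, h1]⟩
      · right
        have hne : d.1 ≠ m := by omega
        exact ⟨by simp [hf, hne], h2⟩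
    have hgspec : ∀ e ∈ Im', (e.1 = m' ∧ e.2 = g e) ∨ (e.1 = g e ∧ e.2 = m') := by
      intro e he
      obtain ⟨heI, hem⟩ := hmemIm' e he
      have := hdiag e heI
      unfold IsDiag at this
      rcases hem with h1 | h2
      · left; exact ⟨h1, by simp [hg, h1]⟩
      · right
        have hne : e.1 ≠ m' := by omega
        exact ⟨by simp [hg, hne], h2⟩
    set S := ((Finset.Icc 1 (n + 3)).erase m).erase m' with hS
    have hScard : S.card = n + 1 := by
      rw [hS, Finset.card_erase_of_mem, Finset.card_erase_of_mem]
      · simp [Nat.card_Icc]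
      · simp; omega
      · apply Finset.mem_erase.mpr
        constructor
        · omega
        · simp; omega
    set Q := Im.image f with hQ
    set R := Im'.image g with hR
    have hQcard : Q.card = Im.card := by
      rw [hQ]
      apply Finset.card_image_of_injOn
      intro d hd d' hd' heq
      rcases hfspec d hd with ⟨a1, a2⟩ | ⟨a1, a2⟩ <;>
        rcases hfspec d' hd' with ⟨b1, b2⟩ | ⟨b1, b2⟩ <;>
        [skip; skip; skip; skip] <;>
        · have h1 := hdiag d (hmemIm d hd).1
          have h2 := hdiag d' (hmemIm d' hd').1
          unfold IsDiag at h1 h2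
          have : d.1 = d'.1 ∧ d.2 = d'.2 := by omega
          exact Prod.ext this.1 this.2
    have hRcard : R.card = Im'.card := by
      rw [hR]
      apply Finset.card_image_of_injOn
      intro d hd d' hd' heq
      rcases hgspec d hd with ⟨a1, a2⟩ | ⟨a1, a2⟩ <;>
        rcases hgspec d' hd' with ⟨b1, b2⟩ | ⟨b1, b2⟩ <;>
        [skip; skip; skip; skip] <;>
        · have h1 := hdiag d (hmemIm' d hd).1
          have h2 := hdiag d' (hmemIm' d' hd').1
          unfold IsDiag at h1 h2
          have : d.1 = d'.1 ∧ d.2 = d'.2 := by omega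
          exact Prod.ext this.1 this.2
    have hQS : Q ⊆ S := by
      intro q hq
      rw [hQ] at hq
      obtain ⟨d, hd, hdq⟩ := Finset.mem_image.mp hq
      have hdiagd := hdiag d (hmemIm d hd).1
      unfold IsDiag at hdiagd
      have hspec := hfspec d hd
      have hqm' : q ≠ m' := by
        intro hqm'
        obtain ⟨e, he⟩ := hIm'ne
        have hcr := hall' d hd e he
        have hem := (hmemIm' e he).2
        apply noncross_of_share _ hcr
        subst hdq; subst hqm'
        rcases hspec with ⟨_, h2⟩ | ⟨h1, _⟩ <;> rcases hem with h3 | h4 <;> omega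
      rw [hS]
      apply Finset.mem_erase.mpr
      refine ⟨hqm', ?_⟩
      apply Finset.mem_erase.mpr
      constructor
      · rcases hspec with ⟨_, h2⟩ | ⟨h1, _⟩ <;> omega
      · simp only [Finset.mem_Icc]
        rcases hspec with ⟨_, h2⟩ | ⟨h1, _⟩ <;> omega
    have hRS : R ⊆ S := by
      intro r hr
      rw [hR] at hr
      obtain ⟨e, he, her⟩ := Finset.mem_image.mp hr
      have hdiage := hdiag e (hmemIm' e he).1
      unfold IsDiag at hdiage
      have hspec := hgspec e he
      have hrm : r ≠ m := by
        intro hrm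
        obtain ⟨d, hd⟩ := hImne
        have hcr := hall' d hd e he
        have hdm := (hmemIm d hd).2
        apply noncross_of_share _ hcr
        subst her; subst hrm
        rcases hspec with ⟨_, h2⟩ | ⟨h1, _⟩ <;> rcases hdm with h3 | h4 <;> omega
      rw [hS]
      apply Finset.mem_erase.mpr
      constructor
      · rcases hspec with ⟨_, h2⟩ | ⟨h1, _⟩ <;> omega
      · apply Finset.mem_erase.mpr
        refine ⟨hrm, ?_⟩
        simp only [Finset.mem_Icc]
        rcases hspec with ⟨_, h2⟩ | ⟨h1, _⟩ <;> omega
    have hdisj : Disjoint Q R := by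
      rw [Finset.disjoint_left]
      intro q hq hqR
      obtain ⟨d, hd, hdq⟩ := Finset.mem_image.mp (hQ ▸ hq)
      obtain ⟨e, he, heq⟩ := Finset.mem_image.mp (hR ▸ hqR)
      have hcr := hall' d hd e he
      apply noncross_of_share _ hcr
      have h1 := hfspec d hd
      have h2 := hgspec e he
      subst hdq
      rcases h1 with ⟨a1, a2⟩ | ⟨a1, a2⟩ <;> rcases h2 with ⟨b1, b2⟩ | ⟨b1, b2⟩ <;> omega
    have hunion : (Q ∪ R).card = Q.card + R.card := Finset.card_union_of_disjoint hdisj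
    have hsub : Q ∪ R ⊆ S := Finset.union_subset hQS hRS
    have := Finset.card_le_card hsub
    omega

/-- Proposition 2.19: if the non-crossing graph of a set `I` of diagonals of the
`(n+3)`-gon has at least two connected components, then some vertex `m` of the polygon
is an endpoint of at most `(n+1)/2` diagonals of `I`. -/
theorem exists_vertex_small_degree (n : ℕ) (hn : 2 ≤ n) (I : Finset (ℕ × ℕ))
    (hdiag : ∀ d ∈ I, IsDiag (n + 3) d)
    (hdisc : ∃ a b : {x // x ∈ I}, ¬ (ncGraph I).Reachable a b) :
    ∃ m : ℕ, 1 ≤ m ∧ m ≤ n + 3 ∧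
      2 * ((I.filter (fun d => d.1 = m ∨ d.2 = m)).card) ≤ n + 1 := by
  by_contra hcon
  push_neg at hcon
  have H : ∀ m : ℕ, 1 ≤ m → m ≤ n + 3 →
      n + 2 ≤ 2 * ((I.filter (fun d => d.1 = m ∨ d.2 = m)).card) := by
    intro m h1 h2
    have := hcon m h1 h2
    omega
  obtain ⟨⟨d, hd⟩, ⟨e, he⟩, hne⟩ := hdisc
  have hdd := hdiag d hd
  have hee := hdiag e he
  unfold IsDiag at hdd hee
  have hm1 : 1 ≤ d.1 := hdd.1
  have hm2 : d.1 ≤ n + 3 := by omega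
  have hm'1 : 1 ≤ e.1 := hee.1
  have hm'2 : e.1 ≤ n + 3 := by omega
  obtain ⟨d', hd', e', he', hcross⟩ :=
    bridge n I hdiag d.1 e.1 hm1 hm2 hm'1 hm'2 (H d.1 hm1 hm2) (H e.1 hm'1 hm'2)
  simp only [Finset.mem_filter] at hd' he'
  apply hne
  have r1 : (ncGraph I).Reachable ⟨d, hd⟩ ⟨d', hd'.1⟩ := by
    apply reach_of_noncross
    apply noncross_of_share
    rcases hd'.2 with h | h
    · left; omega
    · right; left; omega
  have r2 : (ncGraph I).Reachable ⟨d', hd'.1⟩ ⟨e', he'.1⟩ :=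
    reach_of_noncross I hd'.1 he'.1 hcross
  have r3 : (ncGraph I).Reachable ⟨e', he'.1⟩ ⟨e, he⟩ := by
    apply reach_of_noncross
    apply noncross_of_share
    rcases he'.2 with h | h
    · left; omega
    · right; right; left; omega
  exact (r1.trans r2).trans r3
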